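/- arXiv:math/0306295 — 2 statements merged into one kernel-verified Lean document; each statement's English description precedes it below -/
import Mathlib

section
/- Let V : ℝ³ → ℂ be a measurable function such that for every compact set K ⊆ ℝ³ with nonempty interior one has ∫_K |V(x)|² dx = ∞ (V is nowhere locally square-integrable). If u : ℝ³ → ℂ is continuous and the pointwise product V·u is square-integrable on ℝ³ with respect to Lebesgue measure, then u is identically zero. -/
open MeasureTheory
open scoped NNReal ENNReal

/-- If `V : ℝ³ → ℂ` is measurable and fails to be square-integrable on every compact set
with nonempty interior, then any continuous `u : ℝ³ → ℂ` with `V·u` square-integrable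
on `ℝ³` vanishes identically. -/
theorem continuous_eq_zero_of_mul_memLp_of_nowhere_locally_sq_integrable
    (V u : EuclideanSpace ℝ (Fin 3) → ℂ)
    (hV : Measurable V)
    (hVloc : ∀ K : Set (EuclideanSpace ℝ (Fin 3)), IsCompact K → (interior K).Nonempty →
      ∫⁻ x in K, (‖V x‖₊ : ENNReal) ^ 2 ∂(volume : Measure (EuclideanSpace ℝ (Fin 3))) = ⊤)
    (hu : Continuous u)
    (hVu : MemLp (fun x => V x * u x) 2 (volume : Measure (EuclideanSpace ℝ (Fin 3)))) :
    ∀ x, u x = 0 := by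
  by_contra h
  push_neg at h
  obtain ⟨x₀, hx₀⟩ := h
  set δ : ℝ≥0 := ‖u x₀‖₊ / 2 with hδdef
  have hδpos : 0 < δ := by
    have : ‖u x₀‖₊ ≠ 0 := by simpa using hx₀
    positivity
  -- find a closed ball where ‖u‖ ≥ δ
  have hcont : ContinuousAt (fun y => ‖u y‖₊) x₀ := (continuous_nnnorm.comp hu).continuousAt
  have hopen : IsOpen {y | δ < ‖u y‖₊} := isOpen_lt continuous_const (continuous_nnnorm.comp hu)
  have hx₀mem : x₀ ∈ {y | δ < ‖u y‖₊} := by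
    simp only [Set.mem_setOf_eq, hδdef]
    have : (0:ℝ≥0) < ‖u x₀‖₊ := by
      have : ‖u x₀‖₊ ≠ 0 := by simpa using hx₀
      positivity
    exact NNReal.half_lt_self (ne_of_gt this)
  obtain ⟨r, hrpos, hball⟩ := Metric.isOpen_iff.mp hopen x₀ hx₀mem
  set K := Metric.closedBall x₀ (r / 2)
  have hKcompact : IsCompact K := isCompact_closedBall _ _
  have hKint : (interior K).Nonempty := by
    refine ⟨x₀, ?_⟩
    rw [interior_closedBall _ (by positivity)]
    exact Metric.mem_ball_self (by positivity)
  have hKsub : K ⊆ {y | δ < ‖u y‖₊} := fun y hy =>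
    hball (Metric.mem_ball.mpr (lt_of_le_of_lt (Metric.mem_closedBall.mp hy) (by linarith)))
  -- finiteness of ∫ ‖Vu‖²
  have hfin : ∫⁻ y, (‖V y * u y‖₊ : ENNReal) ^ 2 ∂(volume) < ⊤ := by
    have := lintegral_rpow_enorm_lt_top_of_eLpNorm_lt_top (f := fun y => V y * u y)
      (p := 2) two_ne_zero ENNReal.ofNat_ne_top hVu.2
    simpa [ENNReal.toReal_ofNat, ENNReal.rpow_two, enorm_eq_nnnorm] using this
  -- pointwise bound on K
  have hbound : ∀ y ∈ K, (‖V y‖₊ : ENNReal) ^ 2 * (δ : ENNReal) ^ 2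
      ≤ (‖V y * u y‖₊ : ENNReal) ^ 2 := by
    intro y hy
    have hδu : δ ≤ ‖u y‖₊ := le_of_lt (hKsub hy)
    have : (‖V y‖₊ : ENNReal) * δ ≤ (‖V y * u y‖₊ : ENNReal) := by
      rw [nnnorm_mul]
      push_cast
      exact mul_le_mul_right (by exact_mod_cast hδu) _
    calc (‖V y‖₊ : ENNReal) ^ 2 * (δ : ENNReal) ^ 2
        = ((‖V y‖₊ : ENNReal) * δ) ^ 2 := (mul_pow _ _ 2).symm
      _ ≤ (‖V y * u y‖₊ : ENNReal) ^ 2 := pow_le_pow_left' this 2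
  have hKtop := hVloc K hKcompact hKint
  have hle : ∫⁻ y in K, (‖V y‖₊ : ENNReal) ^ 2 * (δ : ENNReal) ^ 2 ∂(volume)
      ≤ ∫⁻ y, (‖V y * u y‖₊ : ENNReal) ^ 2 ∂(volume) := by
    refine le_trans (lintegral_mono_ae ?_) (setLIntegral_le_lintegral _ _)
    filter_upwards [ae_restrict_mem hKcompact.isClosed.measurableSet] with y hy
    exact hbound y hy
  rw [lintegral_mul_const _ (by measurability)] at hle
  have hδ2 : ((δ : ENNReal)) ^ 2 ≠ 0 := by
    simpa using pow_ne_zero 2 (by exact_mod_cast hδpos.ne' : (δ : ENNReal) ≠ 0)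
  rw [hKtop, ENNReal.top_mul hδ2] at hle
  exact absurd (lt_of_le_of_lt hle hfin) (lt_irrefl ⊤)
end

section
/- Let H be a complex Hilbert space, let A and B be (possibly unbounded) linear operators defined on linear subspaces D(A) and D(B) of H respectively, let α ∈ [0, 1), and let β, β' > 0 be real numbers. Assume that for all u ∈ D(A): Re⟨Au, u⟩ ≥ 0 and |Im⟨Au, u⟩| ≤ β · (Re⟨Au, u⟩)^α, and that for all u ∈ D(B): Re⟨Bu, u⟩ ≥ 0 and |Im⟨Bu, u⟩| ≤ β' · (Re⟨Bu, u⟩)^α. Then for all u ∈ D(A) ∩ D(B): Re⟨Au + Bu, u⟩ ≥ 0 and |Im⟨Au + Bu, u⟩| ≤ 2 · max(β, β') · (Re⟨Au + Bu, u⟩)^α. -/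
/-- If the numerical ranges of `A` and `B` lie in the McIntosh-type regions
`S_{α,β} = {z : Re z ≥ 0, |Im z| ≤ β (Re z)^α}` and `S_{α,β'}` respectively,
then the numerical range of the algebraic sum `A + B` (on `D(A) ∩ D(B)`)
lies in `S_{α, 2 max(β,β')}`. -/
theorem numerical_range_sum_mcintosh_sector
    {H : Type*} [NormedAddCommGroup H] [InnerProductSpace ℂ H] [CompleteSpace H]
    (DA DB : Submodule ℂ H) (A : DA →ₗ[ℂ] H) (B : DB →ₗ[ℂ] H)
    (α β β' : ℝ) (hα0 : 0 ≤ α) (hα1 : α < 1) (hβ : 0 < β) (hβ' : 0 < β')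
    (hA : ∀ u : DA, 0 ≤ (inner ℂ (A u) (u : H) : ℂ).re ∧
      |(inner ℂ (A u) (u : H) : ℂ).im| ≤ β * (inner ℂ (A u) (u : H) : ℂ).re ^ α)
    (hB : ∀ u : DB, 0 ≤ (inner ℂ (B u) (u : H) : ℂ).re ∧
      |(inner ℂ (B u) (u : H) : ℂ).im| ≤ β' * (inner ℂ (B u) (u : H) : ℂ).re ^ α) :
    ∀ (u : H) (huA : u ∈ DA) (huB : u ∈ DB),
      0 ≤ (inner ℂ (A ⟨u, huA⟩ + B ⟨u, huB⟩) u : ℂ).re ∧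
        |(inner ℂ (A ⟨u, huA⟩ + B ⟨u, huB⟩) u : ℂ).im| ≤
          2 * max β β' * (inner ℂ (A ⟨u, huA⟩ + B ⟨u, huB⟩) u : ℂ).re ^ α := by

  intro u huA huB
  have key : (inner ℂ (A ⟨u, huA⟩ + B ⟨u, huB⟩) u : ℂ) =
      inner ℂ (A ⟨u, huA⟩) u + inner ℂ (B ⟨u, huB⟩) u := inner_add_left _ _ _
  obtain ⟨ha, ha'⟩ := hA ⟨u, huA⟩
  obtain ⟨hb, hb'⟩ := hB ⟨u, huB⟩
  set a := (inner ℂ (A ⟨u, huA⟩) (u : H) : ℂ).re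
  set b := (inner ℂ (B ⟨u, huB⟩) (u : H) : ℂ).re
  have hre : (inner ℂ (A ⟨u, huA⟩ + B ⟨u, huB⟩) u : ℂ).re = a + b := by
    rw [key, Complex.add_re]
  have him : (inner ℂ (A ⟨u, huA⟩ + B ⟨u, huB⟩) u : ℂ).im =
      (inner ℂ (A ⟨u, huA⟩) (u : H) : ℂ).im + (inner ℂ (B ⟨u, huB⟩) (u : H) : ℂ).im := by
    rw [key, Complex.add_im]
  refine ⟨by rw [hre]; positivity, ?_⟩
  rw [hre, him]
  have h1 : a ^ α ≤ (a + b) ^ α := Real.rpow_le_rpow ha (by linarith) hα0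
  have h2 : b ^ α ≤ (a + b) ^ α := Real.rpow_le_rpow hb (by linarith) hα0
  have hmax : 0 ≤ max β β' := le_max_of_le_left hβ.le
  calc |((inner ℂ (A ⟨u, huA⟩) (u : H) : ℂ).im + (inner ℂ (B ⟨u, huB⟩) (u : H) : ℂ).im)|
      ≤ |(inner ℂ (A ⟨u, huA⟩) (u : H) : ℂ).im| + |(inner ℂ (B ⟨u, huB⟩) (u : H) : ℂ).im| :=
        abs_add_le _ _
    _ ≤ β * a ^ α + β' * b ^ α := add_le_add ha' hb'
    _ ≤ max β β' * (a + b) ^ α + max β β' * (a + b) ^ α := by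
        gcongr
        · exact le_max_left _ _
        · exact le_max_right _ _
    _ = 2 * max β β' * (a + b) ^ α := by ring
end
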